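/- Let ℓ be a prime, m ∈ ℕ ∪ {∞}, and (K,v) a valued field. Let σ, τ ∈ D_v^m be such that σ(−1) = τ(−1) = 0. Then (σ,τ) is a C-pair in 𝔤^m(K) if and only if (σ_v, τ_v) is a C-pair in 𝔤^m(Kv). -/

import Mathlib

open Polynomial

noncomputable section

/-- The coefficient ring `Λ_m`: `ℤ/ℓ^m` for finite `m`, and `ℤ_ℓ` for `m = ∞`. -/
def Lam (ℓ : ℕ) [Fact ℓ.Prime] : ℕ∞ → Type
  | ⊤ => PadicInt ℓ
  | (m : ℕ) => ZMod (ℓ ^ m)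

instance (ℓ : ℕ) [Fact ℓ.Prime] : (m : ℕ∞) → CommRing (Lam ℓ m)
  | ⊤ => inferInstanceAs (CommRing (PadicInt ℓ))
  | (m : ℕ) => inferInstanceAs (CommRing (ZMod (ℓ ^ m)))

/-- The canonical projection `Λ_m → Λ_n` (for `n ≤ m`; junk value `0` otherwise). -/
def LamProj (ℓ : ℕ) [Fact ℓ.Prime] : (m n : ℕ∞) → Lam ℓ m →+ Lam ℓ n
  | ⊤, ⊤ => AddMonoidHom.id _
  | ⊤, (n : ℕ) => (PadicInt.toZModPow n).toAddMonoidHom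
  | (m : ℕ), (n : ℕ) =>
      if h : ℓ ^ n ∣ ℓ ^ m then (ZMod.castHom h (ZMod (ℓ ^ n))).toAddMonoidHom else 0
  | (_ : ℕ), ⊤ => 0

/-- The `ℓ^m`-minimized Galois group `𝔤^m(K) = Hom(Kˣ, Λ_m)`. -/
abbrev gal (ℓ : ℕ) [Fact ℓ.Prime] (m : ℕ∞) (K : Type*) [Field K] : Type _ :=
  Additive Kˣ →+ Lam ℓ m

variable {ℓ : ℕ} [Fact ℓ.Prime] {K : Type*} [Field K]

open scoped Classical

/-- Evaluation of `σ ∈ 𝔤^m(K)` at a unit of `K`. -/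
def galu {m : ℕ∞} (σ : gal ℓ m K) (x : Kˣ) : Lam ℓ m :=
  σ (Additive.ofMul x)

/-- Evaluation of `σ ∈ 𝔤^m(K)` at an arbitrary element of `K` (junk value `0` at `0`). -/
def galApp {m : ℕ∞} (σ : gal ℓ m K) (x : K) : Lam ℓ m :=
  if hx : x ≠ 0 then galu σ (Units.mk0 x hx) else 0

/-- Scalar multiplication of `𝔤^m(K)` by `Λ_m`. -/
def galSmul {m : ℕ∞} (a : Lam ℓ m) (σ : gal ℓ m K) : gal ℓ m K :=
  AddMonoidHom.mk' (fun x => a * σ x) (by intro x y; simp only [map_add, mul_add])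

/-- The canonical map `𝔤^m(K) → 𝔤^n(K)`, `σ ↦ σ_n`. -/
def galProj (m n : ℕ∞) (σ : gal ℓ m K) : gal ℓ n K :=
  (LamProj ℓ m n).comp σ

/-- `(σ,τ)` is a C-pair: `σ(x)·τ(1−x) = σ(1−x)·τ(x)` for all `x ∈ K ∖ {0,1}`. -/
def IsCPair {m : ℕ∞} (σ τ : gal ℓ m K) : Prop :=
  ∀ x : K, x ≠ 0 → x ≠ 1 →
    galApp σ x * galApp τ (1 - x) = galApp σ (1 - x) * galApp τ x

/-- A subset of `𝔤^m(K)` is a C-set if all pairs of its elements are C-pairs. -/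
def IsCSet {m : ℕ∞} (S : Set (gal ℓ m K)) : Prop :=
  ∀ σ ∈ S, ∀ τ ∈ S, IsCPair σ τ

/-- `μ_{c·ℓ^m} ⊂ K`: the polynomial `X^{c·ℓ^m} − 1` splits completely in `K`
(for all finite exponents when `m = ∞`). -/
def MuIn (K : Type*) [Field K] (c ℓ : ℕ) : ℕ∞ → Prop
  | ⊤ => ∀ k : ℕ, Polynomial.Splits (Polynomial.map (RingHom.id K) (Polynomial.X ^ (c * ℓ ^ k) - 1))
  | (N : ℕ) => Polynomial.Splits (Polynomial.map (RingHom.id K) (Polynomial.X ^ (c * ℓ ^ N) - 1))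

/-- `M_r(n) = (r+1)·n − r`. -/
def Mfun (r : ℕ) : ℕ∞ → ℕ∞
  | ⊤ => ⊤
  | (n : ℕ) => (((r + 1) * n - r : ℕ) : ℕ∞)

/-- `N(n) = M_1((6·ℓ^{3n−2} − 7)·(n−1) + 3n − 2)`. -/
def Nfun (ℓ : ℕ) : ℕ∞ → ℕ∞
  | ⊤ => ⊤
  | (n : ℕ) => Mfun 1 (((6 * ℓ ^ (3 * n - 2) - 7) * (n - 1) + 3 * n - 2 : ℕ) : ℕ∞)

/-- `R(n) = N(M_2(M_1(n)))`. -/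
def Rfun (ℓ : ℕ) (n : ℕ∞) : ℕ∞ :=
  Nfun ℓ (Mfun 2 (Mfun 1 n))

/-- The minimized inertia group `I_v^m` of a valuation (valuation subring) of `K`:
homomorphisms vanishing on the `v`-units. -/
def inertia (ℓ : ℕ) [Fact ℓ.Prime] (m : ℕ∞) (A : ValuationSubring K) : Set (gal ℓ m K) :=
  {σ | ∀ x : Kˣ, A.valuation (x : K) = 1 → galu σ x = 0}

/-- The minimized decomposition group `D_v^m` of a valuation (valuation subring) of `K`:
homomorphisms vanishing on the principal `v`-units `1 + 𝔪_v`. -/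
def decomp (ℓ : ℕ) [Fact ℓ.Prime] (m : ℕ∞) (A : ValuationSubring K) : Set (gal ℓ m K) :=
  {σ | ∀ x : Kˣ, A.valuation ((x : K) - 1) < 1 → galu σ x = 0}

/-- A subgroup of (the units of) a linearly ordered group-with-zero is convex. -/
def IsConvexSub {Γ : Type*} [LinearOrderedCommGroupWithZero Γ] (C : Subgroup Γˣ) : Prop :=
  ∀ γ c : Γˣ, (1 : Γ) ≤ (γ : Γ) → (γ : Γ) ≤ (c : Γ) → c ∈ C → γ ∈ C

/-- A subgroup is `ℓ`-divisible. -/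
def IsLDivisible {Γ : Type*} [LinearOrderedCommGroupWithZero Γ] (ℓ : ℕ) (C : Subgroup Γˣ) :
    Prop :=
  ∀ c ∈ C, ∃ d ∈ C, d ^ ℓ = c

/-- Condition (V1): the value group `vK` contains no nontrivial `ℓ`-divisible convex
subgroups. -/
def NoLDivConvex (ℓ : ℕ) (A : ValuationSubring K) : Prop :=
  ∀ C : Subgroup (A.ValueGroup)ˣ, IsConvexSub C → IsLDivisible ℓ C → C = ⊥

/-- The residue field `Kv` of a valuation. -/
abbrev resField (A : ValuationSubring K) : Type _ := IsLocalRing.ResidueField A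

/-- `τ ∈ 𝔤^m(Kv)` is the element induced by `σ ∈ D_v^m` (i.e. `τ = σ_v`): for every
`v`-unit `x` one has `τ(x̄) = σ(x)`. -/
def Induces {m : ℕ∞} (A : ValuationSubring K) (σ : gal ℓ m K)
    (τ : gal ℓ m (resField A)) : Prop :=
  ∀ (x : Kˣ) (h : A.valuation (x : K) = 1),
    galApp τ (IsLocalRing.residue A ⟨(x : K), (A.valuation_le_one_iff (x : K)).mp h.le⟩) =
      galu σ x

/-- An `m`-visible valuation. -/
def IsVisibleVal (ℓ : ℕ) [Fact ℓ.Prime] (m : ℕ∞) (A : ValuationSubring K) : Prop :=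
  NoLDivConvex ℓ A ∧
  ¬ IsCSet (Set.univ : Set (gal ℓ m (resField A))) ∧
  ∀ B : ValuationSubring (resField A),
    decomp ℓ m B = Set.univ → inertia ℓ m B = {0}

/-- `Σ^⊥ = ∩_{σ ∈ Σ} ker σ ⊆ Kˣ`. -/
def orth {m : ℕ∞} (S : Set (gal ℓ m K)) : Set Kˣ :=
  {x | ∀ σ ∈ S, galu σ x = 0}

/-- `σ` is valuative: `σ ∈ I_v^m` for some valuation `v` of `K`. -/
def IsValuative {m : ℕ∞} (σ : gal ℓ m K) : Prop :=
  ∃ A : ValuationSubring K, σ ∈ inertia ℓ m A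

/-- `V = v_σ` is the coarsest valuation with `σ ∈ I_V^m`. -/
def IsVsigma {m : ℕ∞} (σ : gal ℓ m K) (V : ValuationSubring K) : Prop :=
  σ ∈ inertia ℓ m V ∧ ∀ W : ValuationSubring K, σ ∈ inertia ℓ m W → W ≤ V

/-- `V = v_Σ` is the coarsest valuation with `Σ ⊆ I_V^m`. -/
def IsVSet {m : ℕ∞} (S : Set (gal ℓ m K)) (V : ValuationSubring K) : Prop :=
  S ⊆ inertia ℓ m V ∧ ∀ W : ValuationSubring K, S ⊆ inertia ℓ m W → W ≤ V

/-- The set `D^m_n(Σ)`. -/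
def Dmn (n m : ℕ∞) (S : Set (gal ℓ n K)) : Set (gal ℓ n K) :=
  {τ | ∀ σ ∈ S, ∃ τ₁ τ₂ : gal ℓ n K, ∃ σ' τ' τ₁' τ₂' : gal ℓ m K,
    galProj m n σ' = σ ∧ galProj m n τ' = τ ∧ galProj m n τ₁' = τ₁ ∧ galProj m n τ₂' = τ₂ ∧
    ¬ IsCPair τ₁ τ₂ ∧ IsCPair σ' τ' ∧ IsCPair σ' τ₁' ∧ IsCPair σ' τ₂'}

/-- The set `I^m_n(Σ)`. -/
def Imn (n m : ℕ∞) (S : Set (gal ℓ n K)) : Set (gal ℓ n K) :=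
  {σ | σ ∈ S ∧ ∃ σ' : gal ℓ m K, galProj m n σ' = σ ∧
    ∀ τ ∈ S, ∃ τ' : gal ℓ m K, galProj m n τ' = τ ∧ IsCPair σ' τ'}

/-- `K` is a function field over `k`, i.e. a finitely generated field extension. -/
def IsFunctionField (k K : Type*) [Field k] [Field K] [Algebra k K] : Prop :=
  ∃ s : Finset K, IntermediateField.adjoin k (s : Set K) = ⊤

/-- `trdeg(K|k) = d`. -/
def HasTrdeg (k K : Type*) [Field k] [Field K] [Algebra k K] (d : ℕ) : Prop :=
  ∃ b : Fin d → K, IsTranscendenceBasis k b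


/-- The set `ℓ^n·𝔤^m(K)` (interpreted as the trivial subgroup when `n = ∞`). -/
def lPowSet (ℓ : ℕ) [Fact ℓ.Prime] (m : ℕ∞) (K : Type*) [Field K] : ℕ∞ → Set (gal ℓ m K)
  | ⊤ => {0}
  | (k : ℕ) => {x | ∃ σ : gal ℓ m K, x = galSmul ((ℓ : Lam ℓ m) ^ k) σ}

end


section cpairAux
variable {ℓ : ℕ} [Fact ℓ.Prime] {K : Type*} [Field K] {m : ℕ∞}

lemma galu_mul (σ : gal ℓ m K) (x y : Kˣ) : galu σ (x * y) = galu σ x + galu σ y := by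
  show σ (Additive.ofMul (x * y)) = _
  rw [ofMul_mul, map_add]; rfl

lemma galApp_eq (σ : gal ℓ m K) {x : K} (hx : x ≠ 0) :
    galApp σ x = galu σ (Units.mk0 x hx) := dif_pos hx

lemma residue_ne_zero {A : ValuationSubring K} {a : A}
    (h : A.valuation (a : K) = 1) : IsLocalRing.residue A a ≠ 0 := by
  intro h0
  have hmem : a ∈ IsLocalRing.maximalIdeal A := by
    rwa [← Ideal.Quotient.eq_zero_iff_mem]
  rw [A.valuation_lt_one_iff] at hmem
  exact absurd h hmem.ne

lemma val_eq_one_of_residue_ne_zero {A : ValuationSubring K} {a : A}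
    (h : IsLocalRing.residue A a ≠ 0) : A.valuation (a : K) = 1 := by
  by_contra hne
  have hlt : A.valuation (a : K) < 1 := lt_of_le_of_ne (A.valuation_le_one a) hne
  exact h (Ideal.Quotient.eq_zero_iff_mem.mpr ((A.valuation_lt_one_iff a).mpr hlt))

lemma induces_galApp {A : ValuationSubring K} {σ : gal ℓ m K} {σv : gal ℓ m (resField A)}
    (hσv : Induces A σ σv) {x : K} (hx : A.valuation x = 1) (hmem : x ∈ A) :
    galApp σv (IsLocalRing.residue A ⟨x, hmem⟩) = galApp σ x := by
  have hx0 : x ≠ 0 := by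
    intro h0; rw [h0, map_zero] at hx; exact zero_ne_one hx
  rw [galApp_eq σ hx0]
  exact hσv (Units.mk0 x hx0) hx

end cpairAux

/-- C-pairs and residue maps: `(σ,τ)` is a C-pair iff `(σ_v,τ_v)` is. -/
theorem stmt8 (ℓ : ℕ) [Fact ℓ.Prime] (m : ℕ∞) (hm : 1 ≤ m) (K : Type*) [Field K]
    (A : ValuationSubring K) (σ τ : gal ℓ m K)
    (hσ : σ ∈ decomp ℓ m A) (hτ : τ ∈ decomp ℓ m A)
    (hσ1 : galu σ (-1 : Kˣ) = 0) (hτ1 : galu τ (-1 : Kˣ) = 0)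
    (σv τv : gal ℓ m (resField A)) (hσv : Induces A σ σv) (hτv : Induces A τ τv) :
    IsCPair σ τ ↔ IsCPair σv τv := by
  have vle := A.valuation_le_one
  constructor
  · -- forward: K-level C-pair implies residue C-pair
    intro h xb hxb0 hxb1
    obtain ⟨a, rfl⟩ := IsLocalRing.residue_surjective (R := A) xb
    have ha1 : A.valuation (a : K) = 1 := val_eq_one_of_residue_ne_zero hxb0
    set x : K := (a : K) with hxdef
    have hx0 : x ≠ 0 := by
      intro h0; rw [h0, map_zero] at ha1; exact zero_ne_one ha1
    have hx1 : x ≠ 1 := by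
      intro h1
      exact hxb1 (by rw [show a = 1 from Subtype.ext h1, map_one])
    have hres1x : IsLocalRing.residue A (1 - a) = 1 - IsLocalRing.residue A a := by
      rw [map_sub, map_one]
    have h1xb0 : (1 : resField A) - IsLocalRing.residue A a ≠ 0 :=
      sub_ne_zero.mpr fun e => hxb1 e.symm
    have hv1x : A.valuation (1 - x) = 1 := by
      have := val_eq_one_of_residue_ne_zero (a := 1 - a) (by rw [hres1x]; exact h1xb0)
      simpa using this
    have key := h x hx0 hx1
    have e1 : galApp σv (IsLocalRing.residue A a) = galApp σ x := by
      have := induces_galApp hσv ha1 a.2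
      simpa using this
    have e2 : galApp τv (IsLocalRing.residue A a) = galApp τ x := by
      have := induces_galApp hτv ha1 a.2
      simpa using this
    have hmem1x : (1 - x) ∈ A := A.mem_of_valuation_le_one _ hv1x.le
    have e3 : galApp σv (1 - IsLocalRing.residue A a) = galApp σ (1 - x) := by
      have := induces_galApp hσv hv1x hmem1x
      rwa [show (⟨1 - x, hmem1x⟩ : A) = 1 - a from Subtype.ext (by simp [hxdef]), hres1x] at this
    have e4 : galApp τv (1 - IsLocalRing.residue A a) = galApp τ (1 - x) := by
      have := induces_galApp hτv hv1x hmem1x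
      rwa [show (⟨1 - x, hmem1x⟩ : A) = 1 - a from Subtype.ext (by simp [hxdef]), hres1x] at this
    rw [e1, e2, e3, e4]
    exact key
  · -- backward: residue C-pair implies K-level C-pair
    intro h x hx0 hx1
    have h1x0 : (1 : K) - x ≠ 0 := sub_ne_zero.mpr fun e => hx1 e.symm
    rcases lt_trichotomy (A.valuation x) 1 with hlt | heq | hgt
    · -- v(x) < 1 : 1 - x is a principal unit
      have hσ0 : galu σ (Units.mk0 (1 - x) h1x0) = 0 := by
        apply hσ
        simpa using (by simpa [Valuation.map_neg] using hlt :
          A.valuation (-x) < 1)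
      have hτ0 : galu τ (Units.mk0 (1 - x) h1x0) = 0 := by
        apply hτ
        simpa using (by simpa [Valuation.map_neg] using hlt :
          A.valuation (-x) < 1)
      rw [galApp_eq σ h1x0, galApp_eq τ h1x0, hσ0, hτ0, mul_zero, zero_mul]
    · -- v(x) = 1
      rcases lt_or_eq_of_le (by
          have := Valuation.map_sub A.valuation 1 x
          rwa [Valuation.map_one, heq, max_self] at this :
          A.valuation (1 - x) ≤ 1) with hlt1 | heq1
      · -- v(1-x) < 1 : x is a principal unit
        have hσ0 : galu σ (Units.mk0 x hx0) = 0 := by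
          apply hσ
          rwa [Units.val_mk0, show x - 1 = -(1 - x) by ring, Valuation.map_neg]
        have hτ0 : galu τ (Units.mk0 x hx0) = 0 := by
          apply hτ
          rwa [Units.val_mk0, show x - 1 = -(1 - x) by ring, Valuation.map_neg]
        rw [galApp_eq σ hx0, galApp_eq τ hx0, hσ0, hτ0, mul_zero, zero_mul]
      · -- both units : transfer to residue field
        have hmemx : x ∈ A := A.mem_of_valuation_le_one _ heq.le
        have hmem1x : (1 : K) - x ∈ A := A.mem_of_valuation_le_one _ heq1.le
        set xb := IsLocalRing.residue A ⟨x, hmemx⟩ with hxbdef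
        have hxb0 : xb ≠ 0 := residue_ne_zero heq
        have hres1x : IsLocalRing.residue A ⟨1 - x, hmem1x⟩ = 1 - xb := by
          rw [show (⟨1 - x, hmem1x⟩ : A) = 1 - ⟨x, hmemx⟩ from Subtype.ext rfl, map_sub, map_one,
            hxbdef]
        have h1xb0 : (1 : resField A) - xb ≠ 0 := by
          rw [← hres1x]; exact residue_ne_zero heq1
        have hxb1 : xb ≠ 1 := fun e => h1xb0 (by rw [e, sub_self])
        have key := h xb hxb0 hxb1
        rw [← induces_galApp hσv heq hmemx, ← induces_galApp hτv heq hmemx,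
          ← induces_galApp hσv heq1 hmem1x, ← induces_galApp hτv heq1 hmem1x,
          hres1x]
        exact key
    · -- v(x) > 1 : σ(1-x) = σ(x), τ(1-x) = τ(x)
      have hxinv : A.valuation x⁻¹ < 1 := by
        rw [map_inv₀]
        have hx0' : A.valuation x ≠ 0 := by
          simp [Valuation.ne_zero_iff, hx0]
        exact inv_lt_one_of_one_lt₀ hgt
      have hu0 : (1 : K) - x⁻¹ ≠ 0 := by
        intro e
        have : A.valuation ((1 : K) - x⁻¹) = 1 := Valuation.map_one_sub_of_lt A.valuation hxinv
        rw [e, map_zero] at this; exact zero_ne_one this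
      have hufac : Units.mk0 (1 - x) h1x0 =
          (-1 : Kˣ) * Units.mk0 x hx0 * Units.mk0 (1 - x⁻¹) hu0 := by
        ext
        simp only [Units.val_mul, Units.val_neg, Units.val_one, Units.val_mk0]
        field_simp
        ring
      have huσ : galu σ (Units.mk0 (1 - x⁻¹) hu0) = 0 := by
        apply hσ
        rw [Units.val_mk0, show (1 : K) - x⁻¹ - 1 = -(x⁻¹) by ring, Valuation.map_neg]
        exact hxinv
      have huτ : galu τ (Units.mk0 (1 - x⁻¹) hu0) = 0 := by
        apply hτ
        rw [Units.val_mk0, show (1 : K) - x⁻¹ - 1 = -(x⁻¹) by ring, Valuation.map_neg]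
        exact hxinv
      have eσ : galApp σ (1 - x) = galApp σ x := by
        rw [galApp_eq σ h1x0, galApp_eq σ hx0, hufac, galu_mul, galu_mul, hσ1, huσ]
        abel
      have eτ : galApp τ (1 - x) = galApp τ x := by
        rw [galApp_eq τ h1x0, galApp_eq τ hx0, hufac, galu_mul, galu_mul, hτ1, huτ]
        abel
      rw [eσ, eτ, mul_comm]
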